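/- Let 𝔤 be a finite-dimensional complex simple Lie algebra. Then the first skew-prolongation of its adjoint representation, namely {φ ∈ Hom(𝔤, ad(𝔤)) : φ(x)y = −φ(y)x for all x, y ∈ 𝔤}, is one-dimensional and is spanned by the map x ↦ ad(x). -/

import Mathlib

attribute [local instance 100] LieRing.ofAssociativeRing

set_option linter.unusedSectionVars false

namespace Stmt16Aux

open LieAlgebra Module

variable {L : Type*} [LieRing L] [LieAlgebra ℂ L] [Module.Finite ℂ L]

/-! ### Generic helpers -/

private lemma add_self_zero {V : Type*} [AddCommGroup V] [Module ℂ V] (v : V)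
    (h : v + v = 0) : v = 0 := by
  have h2 : (2 : ℂ) • v = 0 := by rw [two_smul]; exact h
  rcases smul_eq_zero.mp h2 with h' | h'
  · norm_num at h'
  · exact h'

private lemma eq_zero_of_eq_neg' {V : Type*} [AddCommGroup V] [Module ℂ V] (v : V)
    (h : v = -v) : v = 0 := by
  apply add_self_zero
  nth_rewrite 1 [h]
  exact neg_add_cancel v

private lemma rank_le_of_ker_le (M M' : Module.End ℂ L)
    (h : LinearMap.ker M ≤ LinearMap.ker M') :
    finrank ℂ (LinearMap.range M') ≤ finrank ℂ (LinearMap.range M) := by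
  have h1 := LinearMap.finrank_range_add_finrank_ker M
  have h2 := LinearMap.finrank_range_add_finrank_ker M'
  have h3 : finrank ℂ (LinearMap.ker M) ≤ finrank ℂ (LinearMap.ker M') :=
    Submodule.finrank_mono h
  omega

private lemma rank_lt_of_ker_lt (M M' : Module.End ℂ L)
    (h : LinearMap.ker M < LinearMap.ker M') :
    finrank ℂ (LinearMap.range M') < finrank ℂ (LinearMap.range M) := by
  have h1 := LinearMap.finrank_range_add_finrank_ker M
  have h2 := LinearMap.finrank_range_add_finrank_ker M'
  have h3 : finrank ℂ (LinearMap.ker M) < finrank ℂ (LinearMap.ker M') :=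
    Submodule.finrank_lt_finrank_of_lt h
  omega

section Simple

variable [LieAlgebra.IsSimple ℂ L]

private lemma nontriv : Nontrivial L := LieModule.nontrivial_of_isIrreducible ℂ L L

private lemma eq_zero_of_lie_right (x : L) (h : ∀ y : L, ⁅x, y⁆ = 0) : x = 0 := by
  have hker : (LieAlgebra.ad ℂ L).ker = ⊥ :=
    LieAlgebra.ad_ker_eq_bot_of_hasTrivialRadical (R := ℂ) (L := L)
  have hinj : Function.Injective (LieAlgebra.ad ℂ L) := (LieHom.ker_eq_bot _).mp hker
  have hx : LieAlgebra.ad ℂ L x = 0 := by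
    ext y
    rw [ad_apply, h y, LinearMap.zero_apply]
  exact hinj (hx.trans (map_zero (LieAlgebra.ad ℂ L)).symm)

/-! ### Symmetric operators: generalized-eigenvalue facts -/

section SymEigen

variable (f : Module.End ℂ L) (hf : ∀ x y : L, ⁅f x, y⁆ = ⁅x, f y⁆)

include hf in
private lemma lie_ker_pows {c d : ℂ} (hcd : c ≠ d) :
    ∀ (n a b : ℕ) (v w : L), a + b ≤ n →
      ((f - c • 1) ^ a) v = 0 → ((f - d • 1) ^ b) w = 0 → ⁅v, w⁆ = 0 := by
  intro n
  induction n with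
  | zero =>
    intro a b v w hab hv hw
    have ha : a = 0 := by omega
    subst ha
    rw [pow_zero, Module.End.one_apply] at hv
    rw [hv, zero_lie]
  | succ n ih =>
    intro a b v w hab hv hw
    match a, b with
    | 0, _ =>
      rw [pow_zero, Module.End.one_apply] at hv
      rw [hv, zero_lie]
    | _ + 1, 0 =>
      rw [pow_zero, Module.End.one_apply] at hw
      rw [hw, lie_zero]
    | a' + 1, b' + 1 =>
      have hv' : ((f - c • 1) ^ a') ((f - c • 1) v) = 0 := by
        rw [← Module.End.mul_apply, ← pow_succ]
        exact hv
      have hw' : ((f - d • 1) ^ b') ((f - d • 1) w) = 0 := by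
        rw [← Module.End.mul_apply, ← pow_succ]
        exact hw
      have e1 : ⁅(f - c • 1) v, w⁆ = 0 := ih a' (b' + 1) _ _ (by omega) hv' hw
      have e2 : ⁅v, (f - d • 1) w⁆ = 0 := ih (a' + 1) b' _ _ (by omega) hv hw'
      have key : (d - c) • ⁅v, w⁆ = ⁅(f - c • 1) v, w⁆ - ⁅v, (f - d • 1) w⁆ := by
        rw [LinearMap.sub_apply, LinearMap.sub_apply, LinearMap.smul_apply,
          LinearMap.smul_apply, Module.End.one_apply, Module.End.one_apply,
          sub_lie, lie_sub, smul_lie, lie_smul, hf v w, sub_smul]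
        abel
      rw [e1, e2, sub_zero] at key
      have hdc : (d - c) ≠ 0 := sub_ne_zero.mpr (Ne.symm hcd)
      rcases smul_eq_zero.mp key with h' | h'
      · exact absurd h' hdc
      · exact h'

include hf in
private lemma lie_maxGen {c d : ℂ} (hcd : c ≠ d) (v w : L)
    (hv : v ∈ f.maxGenEigenspace c) (hw : w ∈ f.maxGenEigenspace d) : ⁅v, w⁆ = 0 := by
  rw [Module.End.mem_maxGenEigenspace] at hv hw
  obtain ⟨a, ha⟩ := hv
  obtain ⟨b, hb⟩ := hw
  exact lie_ker_pows f hf hcd (a + b) a b v w le_rfl ha hb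

include hf in
private lemma sym_exists_nilpotent :
    ∃ c : ℂ, IsNilpotent (f - c • (1 : Module.End ℂ L)) := by
  haveI : Nontrivial L := nontriv
  obtain ⟨c, hc⟩ := Module.End.exists_eigenvalue f
  refine ⟨c, ?_⟩
  -- The centralizer of the `c`-generalized eigenspace.
  let Cent : LieSubalgebra ℂ L :=
    { carrier := {j | ∀ v ∈ f.maxGenEigenspace c, ⁅v, j⁆ = 0}
      add_mem' := fun hj hk v hv => by rw [lie_add, hj v hv, hk v hv, add_zero]
      zero_mem' := fun v _ => lie_zero v
      smul_mem' := fun t j hj v hv => by rw [lie_smul, hj v hv, smul_zero]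
      lie_mem' := fun {x y} hx hy v hv => by
        rw [leibniz_lie, hx v hv, hy v hv, lie_zero, zero_lie, add_zero] }
  have memCent : ∀ j : L, j ∈ Cent ↔ ∀ v ∈ f.maxGenEigenspace c, ⁅v, j⁆ = 0 := fun j => Iff.rfl
  -- sum of the other generalized eigenspaces
  let U : Submodule ℂ L := ⨆ μ : {μ : ℂ // μ ≠ c}, f.maxGenEigenspace μ.1
  let J : LieSubalgebra ℂ L := LieSubalgebra.lieSpan ℂ L (U : Set L)
  have hUJ : (U : Set L) ⊆ J := LieSubalgebra.subset_lieSpan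
  have hJC : J ≤ Cent := by
    rw [LieSubalgebra.lieSpan_le]
    intro j hj
    rw [SetLike.mem_coe] at hj
    refine Submodule.iSup_induction _ (motive := fun j => j ∈ Cent) hj ?_ ?_ ?_
    · rintro ⟨μ, hμ⟩ x hx
      rw [memCent]
      intro v hv
      exact lie_maxGen f hf (Ne.symm hμ) v x hv hx
    · exact Cent.zero_mem
    · intro x y hx hy
      exact Cent.add_mem hx hy
  -- J is an ideal
  let I : LieIdeal ℂ L :=
    { J.toSubmodule with
      lie_mem := by
        intro x m hm
        have hm' : m ∈ J := hm
        have hx : x ∈ ⨆ μ : ℂ, f.maxGenEigenspace μ := by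
          rw [Module.End.iSup_maxGenEigenspace_eq_top]; trivial
        refine Submodule.iSup_induction _ (motive := fun x => ⁅x, m⁆ ∈ J) hx ?_ ?_ ?_
        · intro μ v hv
          by_cases hμ : μ = c
          · subst hμ
            have h0 : ⁅v, m⁆ = 0 := (memCent m).mp (hJC hm') v hv
            show ⁅v, m⁆ ∈ J
            rw [h0]
            exact J.zero_mem
          · have hvU : v ∈ U := Submodule.mem_iSup_of_mem ⟨μ, hμ⟩ hv
            exact J.lie_mem (hUJ hvU) hm'
        · show ⁅(0 : L), m⁆ ∈ J
          rw [zero_lie]; exact J.zero_mem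
        · intro y z hy hz
          show ⁅y + z, m⁆ ∈ J
          rw [add_lie]; exact J.add_mem hy hz }
  have hImem : ∀ z : L, z ∈ I ↔ z ∈ J := fun z => Iff.rfl
  rcases LieAlgebra.IsSimple.eq_bot_or_eq_top I with hbot | htop
  · -- all other generalized eigenspaces vanish, so maxGen c = ⊤
    have hU : ∀ (μ : ℂ), μ ≠ c → f.maxGenEigenspace μ = ⊥ := by
      intro μ hμ
      rw [eq_bot_iff]
      intro v hv
      have hvU : v ∈ U := Submodule.mem_iSup_of_mem ⟨μ, hμ⟩ hv
      have hvI : v ∈ I := (hImem v).mpr (hUJ hvU)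
      rw [hbot] at hvI
      exact hvI
    have htop' : f.maxGenEigenspace c = ⊤ := by
      rw [eq_top_iff, ← Module.End.iSup_maxGenEigenspace_eq_top f]
      apply iSup_le
      intro μ
      by_cases hμ : μ = c
      · subst hμ; exact le_rfl
      · rw [hU μ hμ]; exact bot_le
    refine ⟨finrank ℂ L, ?_⟩
    ext m
    have hm : m ∈ f.maxGenEigenspace c := by rw [htop']; trivial
    rw [f.maxGenEigenspace_eq_genEigenspace_finrank] at hm
    rw [Module.End.mem_genEigenspace_nat] at hm
    simpa using hm
  · -- J = ⊤ forces the c-eigenspace to be central: contradiction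
    exfalso
    obtain ⟨v, hv⟩ := hc.exists_hasEigenvector
    have hvmem : v ∈ f.maxGenEigenspace c := by
      rw [Module.End.mem_maxGenEigenspace]
      refine ⟨1, ?_⟩
      rw [pow_one, LinearMap.sub_apply, LinearMap.smul_apply, Module.End.one_apply,
        hv.apply_eq_smul, sub_self]
    have hv0 : v = 0 := by
      apply eq_zero_of_lie_right
      intro y
      have hy : y ∈ J := by
        have : y ∈ I := by rw [htop]; trivial
        exact (hImem y).mp this
      exact (memCent y).mp (hJC hy) v hvmem
    exact hv.right hv0

end SymEigen

/-! ### The square-zero analysis -/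

end Simple

/-- `gOp N x = [N, ad x]`, the obstruction to equivariance of `N`. -/
private def gOp (N : Module.End ℂ L) (x : L) : Module.End ℂ L :=
  N * LieAlgebra.ad ℂ L x - LieAlgebra.ad ℂ L x * N

/-- products of `ad`'s along a list -/
private def Wd (l : List L) : Module.End ℂ L :=
  (l.map fun a => LieAlgebra.ad ℂ L a).prod

private lemma Wd_nil : Wd ([] : List L) = 1 := by simp [Wd]

private lemma Wd_append_singleton (l : List L) (d : L) (v : L) :
    Wd (l ++ [d]) v = Wd l ⁅d, v⁆ := by
  simp [Wd, List.map_append, List.prod_append, Module.End.mul_apply, ad_apply]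

section SqZeroBasic

variable (N : Module.End ℂ L) (hs : ∀ x y : L, ⁅N x, y⁆ = ⁅x, N y⁆)

private lemma gapp (x y : L) : gOp N x y = N ⁅x, y⁆ - ⁅x, N y⁆ := by
  simp [gOp, LinearMap.sub_apply, Module.End.mul_apply, ad_apply]

private lemma gadd (x y : L) : gOp N (x + y) = gOp N x + gOp N y := by
  ext z
  simp only [gapp, LinearMap.add_apply, add_lie, map_add]
  abel

private lemma NlieEq (x y : L) : N ⁅x, y⁆ = gOp N x y + ⁅x, N y⁆ := by
  rw [gapp]; abel

include hs in
private lemma gsym (x a b : L) : ⁅gOp N x a, b⁆ = ⁅a, gOp N x b⁆ := by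
  rw [gapp, gapp, sub_lie, lie_sub, hs ⁅x, a⁆ b, ← hs a ⁅x, b⁆, lie_lie, lie_lie, ← hs a b]
  abel

include hs in
private lemma gskew (x y : L) : gOp N x y = -(gOp N y x) := by
  rw [gapp, gapp, neg_sub]
  have e1 : ⁅y, x⁆ = -⁅x, y⁆ := by rw [← lie_skew]
  have e2 : ⁅y, N x⁆ = -⁅x, N y⁆ := by rw [← hs y x, ← lie_skew]
  rw [e1, e2, map_neg]
  abel

include hs in
private lemma adg (x y : L) :
    LieAlgebra.ad ℂ L (gOp N x y) = LieAlgebra.ad ℂ L y * gOp N x := by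
  ext w
  rw [Module.End.mul_apply, ad_apply, ad_apply]
  exact gsym N hs x y w

include hs in
private lemma gadcomm (x y : L) :
    LieAlgebra.ad ℂ L y * gOp N x = -(LieAlgebra.ad ℂ L x * gOp N y) := by
  rw [← adg N hs x y, ← adg N hs y x, gskew N hs x y, map_neg]

include hs in
private lemma gadcomm' (x y v : L) : ⁅y, gOp N x v⁆ = -⁅x, gOp N y v⁆ := by
  have h := LinearMap.congr_fun (gadcomm N hs x y) v
  simpa [Module.End.mul_apply, ad_apply] using h

include hs in
private lemma adgx (x : L) : LieAlgebra.ad ℂ L x * gOp N x = 0 :=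
  eq_zero_of_eq_neg' _ (gadcomm N hs x x)

include hs in
private lemma hgbrack (c d v : L) :
    ⁅d, gOp N c v⁆ + ⁅d, gOp N c v⁆ =
      gOp N c ⁅d, v⁆ - gOp N d ⁅c, v⁆ - gOp N ⁅c, d⁆ v := by
  have e1 : ⁅⁅c, d⁆, v⁆ = ⁅c, ⁅d, v⁆⁆ - ⁅d, ⁅c, v⁆⁆ := lie_lie c d v
  have e2 : ⁅⁅c, d⁆, N v⁆ = ⁅c, ⁅d, N v⁆⁆ - ⁅d, ⁅c, N v⁆⁆ := lie_lie c d (N v)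
  have hp : ⁅c, gOp N d v⁆ = -⁅d, gOp N c v⁆ := gadcomm' N hs d c v
  rw [gapp N ⁅c, d⁆ v, e1, e2, map_sub, NlieEq N c ⁅d, v⁆, NlieEq N d ⁅c, v⁆,
    NlieEq N d v, NlieEq N c v, lie_add, lie_add, hp]
  abel

end SqZeroBasic

section Simple2

variable [LieAlgebra.IsSimple ℂ L]

variable (N : Module.End ℂ L) (hs : ∀ x y : L, ⁅N x, y⁆ = ⁅x, N y⁆)
  (h2 : ∀ z : L, N (N z) = 0)

include hs in
private lemma lie_range_ker (v : L) (hv : N v = 0) (z : L) : ⁅v, N z⁆ = 0 := by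
  rw [← hs, hv, zero_lie]

include hs in
private lemma ker_of_lie (v : L) (hv : ∀ z : L, ⁅v, N z⁆ = 0) : N v = 0 := by
  apply eq_zero_of_lie_right
  intro z
  rw [hs]
  exact hv z

include hs h2 in
private lemma hQ
    (hmin : ∀ M : Module.End ℂ L, (∀ x y : L, ⁅M x, y⁆ = ⁅x, M y⁆) →
      (∀ z : L, M (M z) = 0) →
      finrank ℂ (LinearMap.range M) < finrank ℂ (LinearMap.range N) → M = 0)
    (z₀ w : L) : N ⁅N z₀, w⁆ = 0 := by
  by_cases hz : N z₀ = 0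
  · rw [hz, zero_lie, map_zero]
  · set G : Module.End ℂ L := N * LieAlgebra.ad ℂ L (N z₀) with hG
    have hGapp : ∀ a : L, G a = N ⁅N z₀, a⁆ := fun a => by
      simp [hG, Module.End.mul_apply, ad_apply]
    have hNN : ∀ b : L, ⁅N z₀, N b⁆ = 0 := fun b => by
      rw [hs, h2, lie_zero]
    have symG : ∀ a b : L, ⁅G a, b⁆ = ⁅a, G b⁆ := by
      intro a b
      rw [hGapp, hGapp, hs ⁅N z₀, a⁆ b, lie_lie, hNN b, lie_zero, sub_zero]
      rw [← hs a ⁅N z₀, b⁆]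
      have h3 : ⁅N z₀, ⁅N a, b⁆⁆ = ⁅⁅N z₀, N a⁆, b⁆ + ⁅N a, ⁅N z₀, b⁆⁆ := leibniz_lie _ _ _
      rw [hNN a, zero_lie, zero_add] at h3
      rw [← h3, hs a b]
    have sqG : ∀ a : L, G (G a) = 0 := by
      intro a
      rw [hGapp, hGapp a, hNN, map_zero]
    have kerG : LinearMap.ker N ≤ LinearMap.ker G := by
      intro v hv
      rw [LinearMap.mem_ker] at hv ⊢
      have h0 : ⁅v, N z₀⁆ = 0 := lie_range_ker N hs v hv z₀
      have h1 : ⁅N z₀, v⁆ = 0 := by rw [← lie_skew, h0, neg_zero]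
      rw [hGapp, h1, map_zero]
    have Gz₀ : G z₀ = 0 := by
      have h1 : ⁅N z₀, z₀⁆ = -⁅N z₀, z₀⁆ := by
        nth_rewrite 1 [hs]
        rw [← lie_skew]
      rw [hGapp, eq_zero_of_eq_neg' _ h1, map_zero]
    have hlt : LinearMap.ker N < LinearMap.ker G := by
      refine lt_of_le_of_ne kerG ?_
      intro hEq
      have : z₀ ∈ LinearMap.ker N := by
        rw [hEq, LinearMap.mem_ker]
        exact Gz₀
      exact hz (LinearMap.mem_ker.mp this)
    have hG0 := hmin G symG sqG (rank_lt_of_ker_lt N G hlt)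
    have hGw := hGapp w
    rw [hG0] at hGw
    rw [← hGw, LinearMap.zero_apply]

/-- The main square-zero lemma: a nonzero symmetric square-zero operator on a
simple Lie algebra gives a contradiction; by strong induction on the rank. -/
private lemma sq_zero_eq_zero : ∀ (r : ℕ) (N : Module.End ℂ L),
    (∀ x y : L, ⁅N x, y⁆ = ⁅x, N y⁆) → (∀ z : L, N (N z) = 0) →
    finrank ℂ (LinearMap.range N) = r → N = 0 := by
  intro r
  induction r using Nat.strong_induction_on with
  | _ r ih =>
  intro N hs h2 hr
  by_contra hN0
  have hmin : ∀ M : Module.End ℂ L, (∀ x y : L, ⁅M x, y⁆ = ⁅x, M y⁆) →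
      (∀ z : L, M (M z) = 0) →
      finrank ℂ (LinearMap.range M) < finrank ℂ (LinearMap.range N) → M = 0 := by
    intro M hMs hM2 hlt
    rw [hr] at hlt
    exact ih _ hlt M hMs hM2 rfl
  -- basic consequences
  have hE : ∀ x z : L, N ⁅x, N z⁆ = 0 := by
    intro x z
    have h0 : ⁅x, N z⁆ = -⁅N z, x⁆ := by rw [lie_skew]
    rw [h0, map_neg, hQ N hs h2 hmin z x, neg_zero]
  have gNz : ∀ x z : L, gOp N x (N z) = 0 := by
    intro x z
    rw [gapp, hE x z, h2 z, lie_zero, sub_zero]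
  have Ngz : ∀ x z : L, N (gOp N x z) = 0 := by
    intro x z
    rw [gapp, map_sub, h2 ⁅x, z⁆, hE x z, sub_zero]
  have ggform : ∀ x y z : L, gOp N x (gOp N y z) = -(N ⁅x, ⁅y, N z⁆⁆) := by
    intro x y z
    rw [gapp N x (gOp N y z), Ngz y z, lie_zero, sub_zero, gapp N y z, lie_sub, map_sub,
      hE x ⁅y, z⁆, zero_sub]
  have ggcomm : ∀ x y z : L, gOp N x (gOp N y z) = gOp N y (gOp N x z) := by
    intro x y z
    rw [ggform, ggform, neg_inj]
    have e1 : ⁅⁅x, y⁆, N z⁆ = ⁅x, ⁅y, N z⁆⁆ - ⁅y, ⁅x, N z⁆⁆ := lie_lie x y (N z)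
    have e2 : N ⁅⁅x, y⁆, N z⁆ = 0 := hE ⁅x, y⁆ z
    rw [e1, map_sub] at e2
    exact sub_eq_zero.mp e2
  -- diagonal vanishing of g ∘ g
  have ggdiag : ∀ x z : L, gOp N x (gOp N x z) = 0 := by
    intro x z
    by_contra hWz
    set W : Module.End ℂ L := gOp N x * gOp N x with hW
    have hWapp : ∀ a : L, W a = gOp N x (gOp N x a) := fun a => Module.End.mul_apply _ _ _
    have hWne : W ≠ 0 := by
      intro h0
      apply hWz
      rw [← hWapp, h0, LinearMap.zero_apply]
    have symW : ∀ a b : L, ⁅W a, b⁆ = ⁅a, W b⁆ := by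
      intro a b
      rw [hWapp, hWapp, gsym N hs, gsym N hs]
    have formW : ∀ a : L, W a = -(N ⁅x, ⁅x, N a⁆⁆) := fun a => by rw [hWapp, ggform]
    have sqW : ∀ a : L, W (W a) = 0 := by
      intro a
      have hNW : N (W a) = 0 := by rw [hWapp, Ngz]
      rw [formW (W a), hNW, lie_zero, lie_zero, map_zero, neg_zero]
    have kerW : LinearMap.ker N ≤ LinearMap.ker W := by
      intro v hv
      rw [LinearMap.mem_ker] at hv ⊢
      rw [formW, hv, lie_zero, lie_zero, map_zero, neg_zero]
    have hrle : finrank ℂ (LinearMap.range W) ≤ finrank ℂ (LinearMap.range N) :=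
      rank_le_of_ker_le N W kerW
    rcases lt_or_eq_of_le hrle with hlt | heq
    · exact hWne (hmin W symW sqW hlt)
    · have hrangele : LinearMap.range W ≤ LinearMap.range N := by
        rintro _ ⟨a, rfl⟩
        rw [formW]
        exact ⟨-⁅x, ⁅x, N a⁆⁆, by rw [map_neg]⟩
      have hrangeeq : LinearMap.range W = LinearMap.range N :=
        Submodule.eq_of_le_of_finrank_le hrangele (le_of_eq heq.symm)
      have adxW : ∀ a : L, ⁅x, W a⁆ = 0 := by
        intro a
        have h3 := LinearMap.congr_fun (adgx N hs x) (gOp N x a)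
        simpa [Module.End.mul_apply, ad_apply, hWapp] using h3
      have hxN : ∀ z' : L, ⁅x, N z'⁆ = 0 := by
        intro z'
        have : N z' ∈ LinearMap.range W := by
          rw [hrangeeq]; exact ⟨z', rfl⟩
        obtain ⟨a, ha⟩ := this
        rw [← ha]
        exact adxW a
      have : ∀ a : L, W a = 0 := by
        intro a
        rw [formW, hxN a, lie_zero, map_zero, neg_zero]
      exact hWne (LinearMap.ext this)
  -- full vanishing of g ∘ g
  have ggzero : ∀ x y z : L, gOp N x (gOp N y z) = 0 := by
    intro x y z
    have h0 := ggdiag (x + y) z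
    simp only [gadd, LinearMap.add_apply, map_add, ggdiag x z, ggdiag y z, add_zero,
      zero_add] at h0
    rw [← ggcomm x y z] at h0
    exact add_self_zero _ h0
  -- the X-identity and its word generalization
  have hsym12 : ∀ x y z w : L, gOp N x ⁅y, gOp N z w⁆ = gOp N y ⁅x, gOp N z w⁆ := by
    intro x y z w
    have h0 : gOp N ⁅x, y⁆ (gOp N z w) = 0 := ggzero ⁅x, y⁆ z w
    have h1 := hgbrack N hs x y (gOp N z w)
    have h2' : gOp N x (gOp N z w) = 0 := ggzero x z w
    rw [h2', lie_zero, add_zero, h0, sub_zero] at h1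
    exact (sub_eq_zero.mp h1.symm)
  have hskew23 : ∀ x y z w : L, gOp N x ⁅y, gOp N z w⁆ = -(gOp N x ⁅z, gOp N y w⁆) := by
    intro x y z w
    rw [gadcomm' N hs z y w, map_neg]
  have hX : ∀ x y z w : L, gOp N x ⁅y, gOp N z w⁆ = 0 := by
    intro x y z w
    have key : gOp N x ⁅y, gOp N z w⁆ = -(gOp N x ⁅y, gOp N z w⁆) := by
      calc gOp N x ⁅y, gOp N z w⁆ = gOp N y ⁅x, gOp N z w⁆ := hsym12 x y z w
        _ = -(gOp N y ⁅z, gOp N x w⁆) := hskew23 y x z w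
        _ = -(gOp N z ⁅y, gOp N x w⁆) := by rw [hsym12 y z x w]
        _ = -(-(gOp N z ⁅x, gOp N y w⁆)) := by rw [hskew23 z y x w]
        _ = gOp N z ⁅x, gOp N y w⁆ := neg_neg _
        _ = gOp N x ⁅z, gOp N y w⁆ := hsym12 z x y w
        _ = -(gOp N x ⁅y, gOp N z w⁆) := hskew23 x z y w
    exact eq_zero_of_eq_neg' _ key
  have hWord : ∀ (l : List L) (x z w : L), gOp N x (Wd l (gOp N z w)) = 0 := by
    intro l
    induction l using List.reverseRecOn with
    | nil =>
      intro x z w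
      rw [Wd_nil, Module.End.one_apply]
      exact ggzero x z w
    | append_singleton l d ihl =>
      intro x z w
      rw [Wd_append_singleton]
      apply add_self_zero
      have hb := hgbrack N hs z d w
      calc gOp N x (Wd l ⁅d, gOp N z w⁆) + gOp N x (Wd l ⁅d, gOp N z w⁆)
          = gOp N x (Wd l (⁅d, gOp N z w⁆ + ⁅d, gOp N z w⁆)) := by rw [map_add, map_add]
        _ = gOp N x (Wd l (gOp N z ⁅d, w⁆ - gOp N d ⁅z, w⁆ - gOp N ⁅z, d⁆ w)) := by rw [hb]
        _ = 0 := by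
            rw [map_sub, map_sub, map_sub, map_sub, ihl x z ⁅d, w⁆, ihl x d ⁅z, w⁆,
              ihl x ⁅z, d⁆ w, sub_zero, sub_self]
  -- the span of words-around-g operators
  set SetE : Set (Module.End ℂ L) :=
    {e | ∃ l₁ l₂ : List L, ∃ c : L, e = Wd l₁ * gOp N c * Wd l₂} with hSetE
  set EE : Submodule ℂ (Module.End ℂ L) := Submodule.span ℂ SetE with hEE
  have hEleft : ∀ (x : L) (e : Module.End ℂ L), e ∈ EE →
      LieAlgebra.ad ℂ L x * e ∈ EE := by
    intro x e he
    induction he using Submodule.span_induction with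
    | mem e he =>
      obtain ⟨l₁, l₂, c, rfl⟩ := he
      apply Submodule.subset_span
      refine ⟨x :: l₁, l₂, c, ?_⟩
      simp [Wd, List.map_cons, List.prod_cons, mul_assoc]
    | zero => rw [mul_zero]; exact EE.zero_mem
    | add e₁ e₂ _ _ h₁ h₂ => rw [mul_add]; exact EE.add_mem h₁ h₂
    | smul t e _ h₁ => rw [mul_smul_comm]; exact EE.smul_mem t h₁
  have hEright : ∀ (x : L) (e : Module.End ℂ L), e ∈ EE →
      e * LieAlgebra.ad ℂ L x ∈ EE := by
    intro x e he
    induction he using Submodule.span_induction with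
    | mem e he =>
      obtain ⟨l₁, l₂, c, rfl⟩ := he
      apply Submodule.subset_span
      refine ⟨l₁, l₂ ++ [x], c, ?_⟩
      simp [Wd, List.map_append, List.prod_append, List.map_cons, List.prod_cons,
        mul_assoc]
    | zero => rw [zero_mul]; exact EE.zero_mem
    | add e₁ e₂ _ _ h₁ h₂ => rw [add_mul]; exact EE.add_mem h₁ h₂
    | smul t e _ h₁ => rw [smul_mul_assoc]; exact EE.smul_mem t h₁
  have hEg : ∀ (x : L) (e : Module.End ℂ L), e ∈ EE → ∀ v : L, gOp N x (e v) = 0 := by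
    intro x e he
    induction he using Submodule.span_induction with
    | mem e he =>
      obtain ⟨l₁, l₂, c, rfl⟩ := he
      intro v
      have : (Wd l₁ * gOp N c * Wd l₂) v = Wd l₁ (gOp N c (Wd l₂ v)) := by
        rw [Module.End.mul_apply, Module.End.mul_apply]
      rw [this]
      exact hWord l₁ x c (Wd l₂ v)
    | zero => intro v; rw [LinearMap.zero_apply, map_zero]
    | add e₁ e₂ _ _ h₁ h₂ =>
      intro v
      rw [LinearMap.add_apply, map_add, h₁ v, h₂ v, add_zero]
    | smul t e _ h₁ =>
      intro v
      rw [LinearMap.smul_apply, map_smul, h₁ v, smul_zero]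
  -- g vanishes on the image of any g
  have guzero : ∀ x y : L, gOp N (gOp N x y) = 0 := by
    intro x y
    have had : LieAlgebra.ad ℂ L (gOp N x y) = LieAlgebra.ad ℂ L y * gOp N x :=
      adg N hs x y
    have h1 : LieAlgebra.ad ℂ L (gOp N x y) * N = 0 := by
      ext v
      rw [Module.End.mul_apply, had, Module.End.mul_apply, gNz x v, map_zero,
        LinearMap.zero_apply]
    have h3 : N * LieAlgebra.ad ℂ L (gOp N x y) = 0 := by
      ext v
      rw [Module.End.mul_apply, had, Module.End.mul_apply, LinearMap.zero_apply]
      have : N ⁅y, gOp N x v⁆ = gOp N y (gOp N x v) + ⁅y, N (gOp N x v)⁆ := by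
        rw [NlieEq]
      rw [ad_apply, this, ggzero y x v, Ngz x v, lie_zero, add_zero]
    rw [gOp, h1, h3, sub_zero]
  -- dichotomy : either N is equivariant, or we find an element generating a
  -- proper nonzero ideal
  by_cases hg0 : ∀ x : L, gOp N x = 0
  · -- N is equivariant; its kernel is an ideal
    let I : LieIdeal ℂ L :=
      { LinearMap.ker N with
        lie_mem := by
          intro x m hm
          have hm' : N m = 0 := hm
          show N ⁅x, m⁆ = 0
          rw [NlieEq N x m, hg0 x, LinearMap.zero_apply, zero_add, hm', lie_zero]  }
    have hImem : ∀ z : L, z ∈ I ↔ N z = 0 := fun z => Iff.rfl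
    rcases LieAlgebra.IsSimple.eq_bot_or_eq_top I with hbot | htop
    · apply hN0
      ext z
      have : N z ∈ I := (hImem (N z)).mpr (h2 z)
      rw [hbot] at this
      simpa using this
    · apply hN0
      ext z
      have : z ∈ I := by rw [htop]; trivial
      simpa using (hImem z).mp this
  · push_neg at hg0
    obtain ⟨x₀, hx₀⟩ := hg0
    have : ∃ y₀ : L, gOp N x₀ y₀ ≠ 0 := by
      by_contra h
      push_neg at h
      exact hx₀ (LinearMap.ext h)
    obtain ⟨y₀, hy₀⟩ := this
    set u : L := gOp N x₀ y₀ with hu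
    -- the ideal of "totally N-trivial" elements
    let I : LieIdeal ℂ L :=
      { carrier := {z : L | N z = 0 ∧ (∀ w : L, gOp N w z = 0) ∧
          (LieAlgebra.ad ℂ L z : Module.End ℂ L) ∈ EE}
        add_mem' := by
          rintro a b ⟨ha1, ha2, ha3⟩ ⟨hb1, hb2, hb3⟩
          refine ⟨by rw [map_add, ha1, hb1, add_zero], fun w => ?_, ?_⟩
          · rw [map_add, ha2 w, hb2 w, add_zero]
          · rw [map_add]
            exact EE.add_mem ha3 hb3
        zero_mem' := by
          refine ⟨map_zero _, fun w => map_zero _, ?_⟩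
          rw [map_zero]
          exact EE.zero_mem
        smul_mem' := by
          rintro t a ⟨ha1, ha2, ha3⟩
          refine ⟨by rw [map_smul, ha1, smul_zero], fun w => ?_, ?_⟩
          · rw [map_smul, ha2 w, smul_zero]
          · rw [map_smul]
            exact EE.smul_mem t ha3
        lie_mem := by
          rintro x z ⟨hz1, hz2, hz3⟩
          have hgz : gOp N z = 0 := by
            ext w
            rw [gskew N hs z w, hz2 w, neg_zero, LinearMap.zero_apply]
          have hgxz : gOp N ⁅x, z⁆ = 0 := by
            ext v
            have hb := hgbrack N hs x z v
            have e1 : gOp N z ⁅x, v⁆ = 0 := by rw [hgz, LinearMap.zero_apply]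
            have e2 : ⁅z, gOp N x v⁆ = 0 := by
              rw [gadcomm' N hs x z v, hgz, LinearMap.zero_apply, lie_zero, neg_zero]
            have e3 : gOp N x ⁅z, v⁆ = 0 := by
              have := hEg x _ hz3 v
              rwa [ad_apply] at this
            rw [e2, add_zero, e1, sub_zero, e3, zero_sub] at hb
            rw [LinearMap.zero_apply]
            exact neg_eq_zero.mp hb.symm
          refine ⟨?_, fun w => ?_, ?_⟩
          · rw [NlieEq N x z, hz2 x, zero_add, hz1, lie_zero]
          · rw [gskew N hs w ⁅x, z⁆, hgxz, LinearMap.zero_apply, neg_zero]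
          · have : LieAlgebra.ad ℂ L ⁅x, z⁆ =
                LieAlgebra.ad ℂ L x * LieAlgebra.ad ℂ L z
                  - LieAlgebra.ad ℂ L z * LieAlgebra.ad ℂ L x := by
              rw [LieHom.map_lie]
              rfl
            rw [this]
            exact EE.sub_mem (hEleft x _ hz3) (hEright x _ hz3) }
    have hImem : ∀ z : L, z ∈ I ↔ (N z = 0 ∧ (∀ w : L, gOp N w z = 0) ∧
        (LieAlgebra.ad ℂ L z : Module.End ℂ L) ∈ EE) := fun z => Iff.rfl
    have huI : u ∈ I := by
      refine (hImem u).mpr ⟨?_, fun w => ?_, ?_⟩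
      · rw [hu]; exact Ngz x₀ y₀
      · rw [gskew N hs w u, hu, guzero x₀ y₀, LinearMap.zero_apply, neg_zero]
      · rw [hu, adg N hs x₀ y₀]
        apply Submodule.subset_span
        refine ⟨[y₀], [], x₀, ?_⟩
        simp [Wd]
    rcases LieAlgebra.IsSimple.eq_bot_or_eq_top I with hbot | htop
    · rw [hbot] at huI
      exact hy₀ (by simpa using huI)
    · apply hN0
      ext z
      have hz : z ∈ I := by rw [htop]; trivial
      have := ((hImem z).mp hz).1
      simpa using this

end Simple2


/-! ### powers of symmetric operators are symmetric -/

private lemma sym_pow (M : Module.End ℂ L) (hMs : ∀ x y : L, ⁅M x, y⁆ = ⁅x, M y⁆) :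
    ∀ (j : ℕ) (x y : L), ⁅(M ^ j) x, y⁆ = ⁅x, (M ^ j) y⁆ := by
  intro j
  induction j with
  | zero => intro x y; rw [pow_zero, Module.End.one_apply, Module.End.one_apply]
  | succ j ihj =>
    intro x y
    calc ⁅(M ^ (j + 1)) x, y⁆ = ⁅(M ^ j) (M x), y⁆ := by
          rw [pow_succ, Module.End.mul_apply]
      _ = ⁅M x, (M ^ j) y⁆ := ihj (M x) y
      _ = ⁅x, M ((M ^ j) y)⁆ := hMs x ((M ^ j) y)
      _ = ⁅x, (M ^ (j + 1)) y⁆ := by rw [← Module.End.mul_apply, ← pow_succ']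

end Stmt16Aux

/-- for a finite-dimensional complex simple Lie algebra `𝔤`, the first
skew-prolongation `{φ ∈ Hom(𝔤, ad(𝔤)) : φ(x)y = −φ(y)x}` of the adjoint
representation is one-dimensional, spanned by `x ↦ ad(x)`. -/
theorem stmt16 {L : Type*} [LieRing L] [LieAlgebra ℂ L] [Module.Finite ℂ L]
    [LieAlgebra.IsSimple ℂ L] :
    -- `ad` itself lies in the first skew-prolongation of `ad(𝔤)`
    ((∀ x y : L, LieAlgebra.ad ℂ L x y = -(LieAlgebra.ad ℂ L y x)) ∧
      (LieAlgebra.ad ℂ L).toLinearMap ≠ 0) ∧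
    -- and every element of the first skew-prolongation is a multiple of `ad`
    (∀ φ : L →ₗ[ℂ] Module.End ℂ L,
      (∀ x : L, φ x ∈ LinearMap.range (LieAlgebra.ad ℂ L).toLinearMap) →
      (∀ x y : L, φ x y = -(φ y x)) →
      ∃ c : ℂ, φ = c • (LieAlgebra.ad ℂ L).toLinearMap) := by
  constructor
  · constructor
    · intro x y
      rw [LieAlgebra.ad_apply, LieAlgebra.ad_apply, lie_skew]
    · intro h
      have habel : ∀ x y : L, ⁅x, y⁆ = 0 := by
        intro x y
        have h1 := LinearMap.congr_fun h x
        rw [LinearMap.zero_apply] at h1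
        have h2 := LinearMap.congr_fun h1 y
        rw [LinearMap.zero_apply] at h2
        have h3 : (LieAlgebra.ad ℂ L).toLinearMap x = LieAlgebra.ad ℂ L x := rfl
        rw [h3, LieAlgebra.ad_apply] at h2
        exact h2
      exact LieAlgebra.IsSimple.non_abelian (R := ℂ) (L := L) ⟨habel⟩
  · intro φ hrange hskew
    haveI : Nontrivial L := Stmt16Aux.nontriv
    set a : L →ₗ[ℂ] Module.End ℂ L := (LieAlgebra.ad ℂ L).toLinearMap with ha
    have e1 : ∀ z w : L, a z w = ⁅z, w⁆ := fun z w => by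
      have h3 : a z = LieAlgebra.ad ℂ L z := rfl
      rw [h3, LieAlgebra.ad_apply]
    have hainj : Function.Injective a := by
      intro z₁ z₂ hz
      apply sub_eq_zero.mp
      apply Stmt16Aux.eq_zero_of_lie_right
      intro y
      have : a (z₁ - z₂) y = 0 := by
        rw [map_sub, LinearMap.sub_apply, hz, sub_self]
      rwa [e1] at this
    let e : L ≃ₗ[ℂ] LinearMap.range a := LinearEquiv.ofInjective a hainj
    let φ' : L →ₗ[ℂ] LinearMap.range a := φ.codRestrict (LinearMap.range a) hrange
    let ψ : L →ₗ[ℂ] L := (e.symm : LinearMap.range a →ₗ[ℂ] L) ∘ₗ φ'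
    have hcoe : ∀ z : L, (e z : Module.End ℂ L) = a z := fun z => by
      simp [e]
    have had : ∀ x : L, a (ψ x) = φ x := by
      intro x
      have h1 : e (ψ x) = φ' x := by
        show e (e.symm (φ' x)) = φ' x
        exact e.apply_symm_apply (φ' x)
      have h2 := congrArg (Subtype.val) h1
      rw [hcoe] at h2
      exact h2
    have hsym : ∀ x y : L, ⁅ψ x, y⁆ = ⁅x, ψ y⁆ := by
      intro x y
      calc ⁅ψ x, y⁆ = a (ψ x) y := (e1 _ _).symm
        _ = φ x y := by rw [had]
        _ = -(φ y x) := hskew x y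
        _ = -(a (ψ y) x) := by rw [had]
        _ = -⁅ψ y, x⁆ := by rw [e1]
        _ = ⁅x, ψ y⁆ := lie_skew _ _
    obtain ⟨c, hnil⟩ :=
      Stmt16Aux.sym_exists_nilpotent (ψ : Module.End ℂ L) hsym
    refine ⟨c, ?_⟩
    set M : Module.End ℂ L := ψ - c • 1 with hM
    have hMsym : ∀ x y : L, ⁅M x, y⁆ = ⁅x, M y⁆ := by
      intro x y
      rw [hM, LinearMap.sub_apply, LinearMap.sub_apply, LinearMap.smul_apply,
        LinearMap.smul_apply, Module.End.one_apply, Module.End.one_apply, sub_lie, lie_sub,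
        smul_lie, lie_smul, hsym x y]
    have hM0 : M = 0 := by
      by_contra hMne
      obtain ⟨n, hn⟩ := hnil
      have hex : ∃ k, M ^ k = 0 := ⟨n, hn⟩
      classical
      have hk : M ^ (Nat.find hex) = 0 := Nat.find_spec hex
      set k := Nat.find hex with hkdef
      have hone : (1 : Module.End ℂ L) ≠ 0 := by
        intro h10
        obtain ⟨v, hv⟩ := exists_ne (0 : L)
        apply hv
        have := LinearMap.congr_fun h10 v
        rwa [Module.End.one_apply, LinearMap.zero_apply] at this
      have hk0 : k ≠ 0 := by
        intro h0
        rw [h0, pow_zero] at hk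
        exact hone hk
      have hk1 : k ≠ 1 := by
        intro h0
        rw [h0, pow_one] at hk
        exact hMne hk
      have hk2 : 2 ≤ k := by omega
      set Nop : Module.End ℂ L := M ^ (k - 1) with hNop
      have hNne : Nop ≠ 0 := Nat.find_min hex (by omega)
      have hNsym : ∀ x y : L, ⁅Nop x, y⁆ = ⁅x, Nop y⁆ := fun x y =>
        Stmt16Aux.sym_pow M hMsym (k - 1) x y
      have hNsq : ∀ z : L, Nop (Nop z) = 0 := by
        intro z
        have hmul : Nop * Nop = 0 := by
          rw [hNop, ← pow_add]
          have harith : k - 1 + (k - 1) = k + (k - 2) := by omega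
          rw [harith, pow_add, hk, zero_mul]
        calc Nop (Nop z) = (Nop * Nop) z := (Module.End.mul_apply _ _ _).symm
          _ = 0 := by rw [hmul, LinearMap.zero_apply]
      exact hNne (Stmt16Aux.sq_zero_eq_zero (Module.finrank ℂ (LinearMap.range Nop))
        Nop hNsym hNsq rfl)
    have hψ : ψ = c • 1 := by
      have := sub_eq_zero.mp hM0
      exact this
    refine LinearMap.ext fun x => ?_
    rw [← had x, hψ]
    rw [LinearMap.smul_apply, LinearMap.smul_apply, Module.End.one_apply, map_smul]
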